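/- Let n ∈ ℕ and let f, g be real-valued functions on ℝ, each n times differentiable. Then for all x ∈ ℝ, x · Σ_{k=0}^{n} C(n,k) · (d/dx)^k[x^k f(x)] · (d/dx)^{n-k}[x^{n-k} g(x)] = (d/dx)^n [x^{n+1} f(x) g(x)], where C(n,k) is the binomial coefficient. -/

import Mathlib

open scoped BigOperators

open Finset

/-- Hockey-stick over `range`. -/
lemma aux_hockey (m a : ℕ) :
    ∑ k ∈ Finset.range (m + 1), Nat.choose k a = Nat.choose (m + 1) (a + 1) := by
  rw [← Nat.sum_Icc_choose]
  refine (Finset.sum_subset ?_ ?_).symm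
  · intro x hx
    simp only [Finset.mem_Icc, Finset.mem_range] at hx ⊢
    omega
  · intro x hx hx'
    simp only [Finset.mem_Icc, Finset.mem_range, not_and, not_le] at hx hx'
    exact Nat.choose_eq_zero_of_lt (by omega)

lemma aux_sum_choose (n : ℕ) (a : ℕ) : ∀ b : ℕ,
    ∑ k ∈ Finset.range (n + 1), Nat.choose k a * Nat.choose (n - k) b
      = Nat.choose (n + 1) (a + b + 1) := by
  induction n with
  | zero =>
    intro b
    rw [Finset.sum_range_one]
    by_cases ha : a = 0
    · by_cases hb : b = 0
      · subst ha; subst hb; simp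
      · subst ha
        rw [show Nat.choose (0 - 0) b = 0 from Nat.choose_eq_zero_of_lt (by omega),
            show Nat.choose (0 + 1) (0 + b + 1) = 0 from Nat.choose_eq_zero_of_lt (by omega)]
        simp
    · rw [show Nat.choose 0 a = 0 from Nat.choose_eq_zero_of_lt (by omega),
          show Nat.choose (0 + 1) (a + b + 1) = 0 from Nat.choose_eq_zero_of_lt (by omega)]
      simp
  | succ n ih =>
    intro b
    rcases b with _ | b
    · simp only [Nat.choose_zero_right, Nat.mul_one]
      rw [aux_hockey]
    · rw [Finset.sum_range_succ]
      rw [Nat.sub_self, Nat.choose_zero_succ, Nat.mul_zero, Nat.add_zero]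
      have hstep : ∀ k ∈ Finset.range (n + 1),
          Nat.choose k a * Nat.choose (n + 1 - k) (b + 1)
            = Nat.choose k a * Nat.choose (n - k) b
              + Nat.choose k a * Nat.choose (n - k) (b + 1) := by
        intro k hk
        rw [Finset.mem_range] at hk
        have : n + 1 - k = (n - k) + 1 := by omega
        rw [this, Nat.choose_succ_succ, Nat.mul_add]
      rw [Finset.sum_congr rfl hstep, Finset.sum_add_distrib, ih b, ih (b + 1)]
      rw [show a + (b + 1) + 1 = (a + b + 1) + 1 by omega, ← Nat.choose_succ_succ]

lemma aux_term (n k a b : ℕ) (hk : k ≤ n) :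
    Nat.choose n k * (Nat.choose k a * Nat.descFactorial k (k - a))
      * (Nat.choose (n - k) b * Nat.descFactorial (n - k) (n - k - b))
      * (Nat.factorial a * Nat.factorial b)
    = Nat.factorial n * (Nat.choose k a * Nat.choose (n - k) b) := by
  rcases Nat.lt_or_ge k a with h | h
  · rw [Nat.choose_eq_zero_of_lt h]; ring
  rcases Nat.lt_or_ge (n - k) b with h' | h'
  · rw [Nat.choose_eq_zero_of_lt h']; ring
  have e1 : Nat.factorial a * Nat.descFactorial k (k - a) = Nat.factorial k := by
    have := Nat.factorial_mul_descFactorial (show k - a ≤ k by omega)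
    rwa [show k - (k - a) = a by omega] at this
  have e2 : Nat.factorial b * Nat.descFactorial (n - k) (n - k - b) = Nat.factorial (n - k) := by
    have := Nat.factorial_mul_descFactorial (show n - k - b ≤ n - k by omega)
    rwa [show n - k - (n - k - b) = b by omega] at this
  have e3 := Nat.choose_mul_factorial_mul_factorial hk
  calc Nat.choose n k * (Nat.choose k a * Nat.descFactorial k (k - a))
      * (Nat.choose (n - k) b * Nat.descFactorial (n - k) (n - k - b))
      * (Nat.factorial a * Nat.factorial b)
      = (Nat.choose k a * Nat.choose (n - k) b) *
          (Nat.choose n k * (Nat.factorial a * Nat.descFactorial k (k - a))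
            * (Nat.factorial b * Nat.descFactorial (n - k) (n - k - b))) := by ring
    _ = (Nat.choose k a * Nat.choose (n - k) b) *
          (Nat.choose n k * Nat.factorial k * Nat.factorial (n - k)) := by rw [e1, e2]
    _ = (Nat.choose k a * Nat.choose (n - k) b) * Nat.factorial n := by rw [e3]
    _ = Nat.factorial n * (Nat.choose k a * Nat.choose (n - k) b) := by ring

lemma aux_coeff (n a b : ℕ) :
    ∑ k ∈ Finset.range (n + 1),
      Nat.choose n k * (Nat.choose k a * Nat.descFactorial k (k - a))
        * (Nat.choose (n - k) b * Nat.descFactorial (n - k) (n - k - b))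
      = Nat.choose n (a + b) * Nat.descFactorial (n + 1) (n - (a + b)) * Nat.choose (a + b) a := by
  rcases Nat.lt_or_ge n (a + b) with hc | hc
  · rw [Nat.choose_eq_zero_of_lt hc]
    rw [Finset.sum_eq_zero, Nat.zero_mul, Nat.mul_comm, Nat.mul_zero]
    intro k hk
    rw [Finset.mem_range] at hk
    rcases Nat.lt_or_ge k a with h | h
    · rw [Nat.choose_eq_zero_of_lt h]; ring
    · rw [show Nat.choose (n - k) b = 0 from Nat.choose_eq_zero_of_lt (by omega)]; ring
  · -- a + b ≤ n
    set c := a + b with hcdef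
    have hM : 0 < Nat.factorial a * Nat.factorial b
        * (Nat.factorial (n - c) * Nat.factorial (c + 1)) :=
      Nat.mul_pos (Nat.mul_pos (Nat.factorial_pos a) (Nat.factorial_pos b))
        (Nat.mul_pos (Nat.factorial_pos _) (Nat.factorial_pos _))
    apply Nat.eq_of_mul_eq_mul_right hM
    -- LHS * M
    rw [Finset.sum_mul]
    have hterm : ∀ k ∈ Finset.range (n + 1),
        Nat.choose n k * (Nat.choose k a * Nat.descFactorial k (k - a))
          * (Nat.choose (n - k) b * Nat.descFactorial (n - k) (n - k - b))
          * (Nat.factorial a * Nat.factorial b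
              * (Nat.factorial (n - c) * Nat.factorial (c + 1)))
        = (Nat.choose k a * Nat.choose (n - k) b)
            * (Nat.factorial n * (Nat.factorial (n - c) * Nat.factorial (c + 1))) := by
      intro k hk
      rw [Finset.mem_range] at hk
      have := aux_term n k a b (by omega)
      calc Nat.choose n k * (Nat.choose k a * Nat.descFactorial k (k - a))
          * (Nat.choose (n - k) b * Nat.descFactorial (n - k) (n - k - b))
          * (Nat.factorial a * Nat.factorial b
              * (Nat.factorial (n - c) * Nat.factorial (c + 1)))
          = Nat.choose n k * (Nat.choose k a * Nat.descFactorial k (k - a))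
            * (Nat.choose (n - k) b * Nat.descFactorial (n - k) (n - k - b))
            * (Nat.factorial a * Nat.factorial b)
            * (Nat.factorial (n - c) * Nat.factorial (c + 1)) := by ring
        _ = Nat.factorial n * (Nat.choose k a * Nat.choose (n - k) b)
            * (Nat.factorial (n - c) * Nat.factorial (c + 1)) := by rw [this]
        _ = (Nat.choose k a * Nat.choose (n - k) b)
            * (Nat.factorial n * (Nat.factorial (n - c) * Nat.factorial (c + 1))) := by ring
    rw [Finset.sum_congr rfl hterm, ← Finset.sum_mul, aux_sum_choose n a b]
    -- now: C(n+1, a+b+1) * (n! * ((n-c)! * (c+1)!)) = RHS * M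
    have f4 : Nat.choose (n + 1) (c + 1) * Nat.factorial (c + 1) * Nat.factorial (n - c)
        = Nat.factorial (n + 1) := by
      have := Nat.choose_mul_factorial_mul_factorial (show c + 1 ≤ n + 1 by omega)
      rwa [show n + 1 - (c + 1) = n - c by omega] at this
    have f1 : Nat.choose c a * Nat.factorial a * Nat.factorial b = Nat.factorial c := by
      have := Nat.choose_mul_factorial_mul_factorial (show a ≤ c by omega)
      rwa [show c - a = b by omega] at this
    have f2 := Nat.choose_mul_factorial_mul_factorial hc
    have f3 : Nat.factorial (c + 1) * Nat.descFactorial (n + 1) (n - c)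
        = Nat.factorial (n + 1) := by
      have := Nat.factorial_mul_descFactorial (show n - c ≤ n + 1 by omega)
      rwa [show n + 1 - (n - c) = c + 1 by omega] at this
    calc Nat.choose (n + 1) (a + b + 1)
          * (Nat.factorial n * (Nat.factorial (n - c) * Nat.factorial (c + 1)))
        = Nat.factorial n
            * (Nat.choose (n + 1) (c + 1) * Nat.factorial (c + 1) * Nat.factorial (n - c)) := by
          rw [← hcdef]; ring
      _ = Nat.factorial n * Nat.factorial (n + 1) := by rw [f4]
      _ = (Nat.choose n c * Nat.factorial c * Nat.factorial (n - c))
            * (Nat.factorial (c + 1) * Nat.descFactorial (n + 1) (n - c)) := by rw [f2, f3]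
      _ = (Nat.choose n c * (Nat.choose c a * Nat.factorial a * Nat.factorial b)
            * Nat.factorial (n - c))
            * (Nat.factorial (c + 1) * Nat.descFactorial (n + 1) (n - c)) := by rw [f1]
      _ = Nat.choose n (a + b) * Nat.descFactorial (n + 1) (n - (a + b)) * Nat.choose (a + b) a
            * (Nat.factorial a * Nat.factorial b
                * (Nat.factorial (n - c) * Nat.factorial (c + 1))) := by
          rw [← hcdef]; ring

lemma iteratedDeriv_pow_fun (p : ℕ) : ∀ i : ℕ,
    iteratedDeriv i (fun x : ℝ => x ^ p)
      = fun x : ℝ => (Nat.descFactorial p i : ℝ) * x ^ (p - i)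
  | 0 => by
    funext x; simp
  | i + 1 => by
    rw [iteratedDeriv_succ, iteratedDeriv_pow_fun p i]
    funext x
    rw [deriv_const_mul_field, deriv_pow_field]
    rw [Nat.descFactorial_succ, show p - i - 1 = p - (i + 1) from Nat.sub_sub p i 1]
    push_cast
    ring

lemma leibniz_iteratedDeriv : ∀ (n : ℕ) (f g : ℝ → ℝ),
    ContDiff ℝ (n : ℕ∞) f → ContDiff ℝ (n : ℕ∞) g →
    iteratedDeriv n (fun t => f t * g t)
      = fun x => ∑ k ∈ Finset.range (n + 1),
          (n.choose k : ℝ) * iteratedDeriv k f x * iteratedDeriv (n - k) g x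
  | 0, f, g, _, _ => by
    funext x; simp
  | n + 1, f, g, hf, hg => by
    rw [iteratedDeriv_succ,
      leibniz_iteratedDeriv n f g (hf.of_le (by exact_mod_cast Nat.le_succ n))
        (hg.of_le (by exact_mod_cast Nat.le_succ n))]
    funext x
    have hdf : ∀ k, k ≤ n → DifferentiableAt ℝ (iteratedDeriv k f) x := fun k hk =>
      (hf.differentiable_iteratedDeriv k (by exact_mod_cast Nat.lt_succ_of_le hk)).differentiableAt
    have hdg : ∀ k, k ≤ n → DifferentiableAt ℝ (iteratedDeriv k g) x := fun k hk =>
      (hg.differentiable_iteratedDeriv k (by exact_mod_cast Nat.lt_succ_of_le hk)).differentiableAt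
    rw [deriv_fun_sum (fun k hk => ?_)]; swap
    · rw [Finset.mem_range] at hk
      exact ((differentiableAt_const _).mul (hdf k (by omega))).mul (hdg (n - k) (by omega))
    have hterm : ∀ k ∈ Finset.range (n + 1),
        deriv (fun y => (n.choose k : ℝ) * iteratedDeriv k f y * iteratedDeriv (n - k) g y) x
          = (n.choose k : ℝ) * iteratedDeriv (k + 1) f x * iteratedDeriv (n - k) g x
            + (n.choose k : ℝ) * iteratedDeriv k f x * iteratedDeriv (n - k + 1) g x := by
      intro k hk
      rw [Finset.mem_range] at hk
      rw [deriv_fun_mul ((differentiableAt_const _).fun_mul (hdf k (by omega))) (hdg (n - k) (by omega)),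
        deriv_const_mul_field, ← iteratedDeriv_succ, ← iteratedDeriv_succ]
    rw [Finset.sum_congr rfl hterm, Finset.sum_add_distrib]
    -- now combine with Pascal
    have key : ∀ A : ℕ → ℝ,
        (∑ k ∈ Finset.range (n + 1), (n.choose k : ℝ) * A (k + 1))
          + ∑ k ∈ Finset.range (n + 1), (n.choose k : ℝ) * A k
        = ∑ j ∈ Finset.range (n + 2), ((n + 1).choose j : ℝ) * A j := by
      intro A
      rw [Finset.sum_range_succ' (fun j => ((n + 1).choose j : ℝ) * A j) (n + 1)]
      rw [Finset.sum_range_succ' (fun k => (n.choose k : ℝ) * A k) n]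
      simp only [Nat.choose_succ_succ, Nat.choose_zero_right, Nat.cast_add, add_mul,
        Finset.sum_add_distrib, Nat.cast_one]
      rw [Finset.sum_range_succ (fun k => (n.choose (k + 1) : ℝ) * A (k + 1)) n,
        Nat.choose_succ_self]
      push_cast
      ring
    have e1 : ∀ k ∈ Finset.range (n + 1),
        (n.choose k : ℝ) * iteratedDeriv (k + 1) f x * iteratedDeriv (n - k) g x
          = (n.choose k : ℝ)
              * (iteratedDeriv (k + 1) f x * iteratedDeriv (n + 1 - (k + 1)) g x) := by
      intro k hk; rw [Finset.mem_range] at hk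
      rw [show n + 1 - (k + 1) = n - k by omega, mul_assoc]
    have e2 : ∀ k ∈ Finset.range (n + 1),
        (n.choose k : ℝ) * iteratedDeriv k f x * iteratedDeriv (n - k + 1) g x
          = (n.choose k : ℝ) * (iteratedDeriv k f x * iteratedDeriv (n + 1 - k) g x) := by
      intro k hk; rw [Finset.mem_range] at hk
      rw [show n + 1 - k = n - k + 1 by omega, mul_assoc]
    rw [Finset.sum_congr rfl e1, Finset.sum_congr rfl e2,
      key (fun j => iteratedDeriv j f x * iteratedDeriv (n + 1 - j) g x)]
    refine Finset.sum_congr rfl fun j hj => by rw [mul_assoc]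

lemma iteratedDeriv_pow_mul (m p : ℕ) (h : ℝ → ℝ) (hh : ContDiff ℝ (m : ℕ∞) h) (x : ℝ) :
    iteratedDeriv m (fun t => t ^ p * h t) x
      = ∑ i ∈ Finset.range (m + 1),
          (m.choose i : ℝ) * ((Nat.descFactorial p i : ℝ) * x ^ (p - i))
            * iteratedDeriv (m - i) h x := by
  have hpow : ContDiff ℝ ((m : ℕ∞) : WithTop ℕ∞) (fun t : ℝ => t ^ p) := by
    exact contDiff_id.pow p
  have := leibniz_iteratedDeriv m (fun t : ℝ => t ^ p) h hpow hh
  rw [congrFun this x]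
  refine Finset.sum_congr rfl fun i hi => ?_
  rw [iteratedDeriv_pow_fun]

/-- Reflected and range-extended expansion. -/
lemma expand_pow_mul (n k : ℕ) (h : ℝ → ℝ) (hh : ContDiff ℝ (k : ℕ∞) h) (hkn : k ≤ n) (x : ℝ) :
    iteratedDeriv k (fun t => t ^ k * h t) x
      = ∑ a ∈ Finset.range (n + 1),
          ((k.choose a * Nat.descFactorial k (k - a) : ℕ) : ℝ)
            * (x ^ a * iteratedDeriv a h x) := by
  rw [iteratedDeriv_pow_mul k k h hh x]
  rw [← Finset.sum_range_reflect]
  have step1 : ∀ a ∈ Finset.range (k + 1),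
      (k.choose (k + 1 - 1 - a) : ℝ)
          * ((Nat.descFactorial k (k + 1 - 1 - a) : ℝ) * x ^ (k - (k + 1 - 1 - a)))
          * iteratedDeriv (k - (k + 1 - 1 - a)) h x
        = ((k.choose a * Nat.descFactorial k (k - a) : ℕ) : ℝ)
            * (x ^ a * iteratedDeriv a h x) := by
    intro a ha
    rw [Finset.mem_range] at ha
    rw [show k + 1 - 1 - a = k - a by omega, show k - (k - a) = a by omega,
      Nat.choose_symm (show a ≤ k by omega)]
    push_cast; ring
  rw [Finset.sum_congr rfl step1]
  apply Finset.sum_subset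
  · exact Finset.range_subset_range.mpr (by omega)
  · intro a _ ha'
    rw [Finset.mem_range] at ha'
    rw [Nat.choose_eq_zero_of_lt (by omega)]
    simp

section Reindex

lemma reindex_pairs (n : ℕ) (S R : ℕ → ℕ → ℝ)
    (hS : ∀ j c, c ≤ n → j < c → S j c = 0)
    (hR : ∀ a b, a ≤ n → b ≤ n → n < a + b → R a b = 0)
    (hmatch : ∀ a b, a + b ≤ n → S (a + b) a = R a b) :
    ∑ j ∈ Finset.range (n + 1), ∑ c ∈ Finset.range (n + 1), S j c
      = ∑ a ∈ Finset.range (n + 1), ∑ b ∈ Finset.range (n + 1), R a b := by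
  rw [← Finset.sum_product' (s := Finset.range (n + 1)) (t := Finset.range (n + 1))
      (f := fun j c => S j c),
    ← Finset.sum_product' (s := Finset.range (n + 1)) (t := Finset.range (n + 1))
      (f := fun a b => R a b)]
  conv_lhs => rw [← Finset.sum_filter_of_ne
      (p := fun p : ℕ × ℕ => p.2 ≤ p.1) (fun p hp hne => by
        by_contra hc
        rw [Finset.mem_product, Finset.mem_range, Finset.mem_range] at hp
        exact hne (hS p.1 p.2 (by omega) (by omega)))]
  conv_rhs => rw [← Finset.sum_filter_of_ne
      (p := fun p : ℕ × ℕ => p.1 + p.2 ≤ n) (fun p hp hne => by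
        by_contra hc
        rw [Finset.mem_product, Finset.mem_range, Finset.mem_range] at hp
        exact hne (hR p.1 p.2 (by omega) (by omega) (by omega)))]
  refine Finset.sum_nbij' (fun p => (p.2, p.1 - p.2)) (fun q => (q.1 + q.2, q.1))
    ?_ ?_ ?_ ?_ ?_
  · intro p hp
    simp only [Finset.mem_filter, Finset.mem_product, Finset.mem_range] at hp ⊢
    omega
  · intro q hq
    simp only [Finset.mem_filter, Finset.mem_product, Finset.mem_range] at hq ⊢
    omega
  · intro p hp
    simp only [Finset.mem_filter, Finset.mem_product, Finset.mem_range] at hp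
    exact Prod.ext (by simp; omega) (by simp)
  · intro q hq
    simp only [Finset.mem_filter, Finset.mem_product, Finset.mem_range] at hq
    exact Prod.ext (by simp) (by simp)
  · intro p hp
    simp only [Finset.mem_filter, Finset.mem_product, Finset.mem_range] at hp
    have : p.2 + (p.1 - p.2) = p.1 := by omega
    rw [← hmatch p.2 (p.1 - p.2) (by omega), this]

end Reindex

theorem stmt_7 (n : ℕ) (f g : ℝ → ℝ)
    (hf : ContDiff ℝ (n : ℕ∞) f) (hg : ContDiff ℝ (n : ℕ∞) g) (x : ℝ) :
    x * ∑ k ∈ Finset.range (n + 1),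
      (n.choose k : ℝ) *
        iteratedDeriv k (fun t => t ^ k * f t) x *
        iteratedDeriv (n - k) (fun t => t ^ (n - k) * g t) x
      = iteratedDeriv n (fun t => t ^ (n + 1) * f t * g t) x := by
  have hfm : ∀ m : ℕ, m ≤ n → ContDiff ℝ ((m : ℕ∞) : WithTop ℕ∞) f :=
    fun m hm => hf.of_le (by exact_mod_cast hm)
  have hgm : ∀ m : ℕ, m ≤ n → ContDiff ℝ ((m : ℕ∞) : WithTop ℕ∞) g :=
    fun m hm => hg.of_le (by exact_mod_cast hm)
  -- RHS expansion
  have hRHS : iteratedDeriv n (fun t => t ^ (n + 1) * f t * g t) x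
      = ∑ j ∈ Finset.range (n + 1), ∑ c ∈ Finset.range (n + 1),
          ((n.choose j * Nat.descFactorial (n + 1) (n - j) * Nat.choose j c : ℕ) : ℝ)
            * (x ^ (j + 1) * (iteratedDeriv c f x * iteratedDeriv (j - c) g x)) := by
    have h1 : (fun t : ℝ => t ^ (n + 1) * f t * g t)
        = fun t : ℝ => t ^ (n + 1) * (f t * g t) := by funext t; ring
    rw [h1, iteratedDeriv_pow_mul n (n + 1) _ (hf.mul hg) x, ← Finset.sum_range_reflect]
    refine Finset.sum_congr rfl fun j hj => ?_
    rw [Finset.mem_range] at hj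
    rw [show n + 1 - 1 - j = n - j by omega, show n - (n - j) = j by omega,
      Nat.choose_symm (show j ≤ n by omega),
      show n + 1 - (n - j) = j + 1 by omega]
    rw [congrFun (leibniz_iteratedDeriv j f g (hfm j (by omega)) (hgm j (by omega))) x,
      Finset.mul_sum]
    refine (Finset.sum_congr rfl fun c _ => ?_).trans
      (Finset.sum_subset (Finset.range_subset_range.mpr (by omega)) fun c _ hc => ?_)
    · push_cast; ring
    · rw [Finset.mem_range, not_lt] at hc
      rw [Nat.choose_eq_zero_of_lt (show j < c by omega), Nat.mul_zero, Nat.cast_zero, zero_mul]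
  rw [hRHS]
  -- LHS expansion
  have hL1 : ∀ k ∈ Finset.range (n + 1),
      x * ((n.choose k : ℝ) * iteratedDeriv k (fun t => t ^ k * f t) x
          * iteratedDeriv (n - k) (fun t => t ^ (n - k) * g t) x)
        = ∑ a ∈ Finset.range (n + 1), ∑ b ∈ Finset.range (n + 1),
            ((n.choose k * (Nat.choose k a * Nat.descFactorial k (k - a))
                * (Nat.choose (n - k) b * Nat.descFactorial (n - k) (n - k - b)) : ℕ) : ℝ)
              * (x ^ (a + b + 1) * (iteratedDeriv a f x * iteratedDeriv b g x)) := by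
    intro k hk
    rw [Finset.mem_range] at hk
    rw [expand_pow_mul n k f (hfm k (by omega)) (by omega) x,
      expand_pow_mul n (n - k) g (hgm (n - k) (by omega)) (by omega) x,
      mul_assoc, Finset.sum_mul_sum, Finset.mul_sum, Finset.mul_sum]
    refine Finset.sum_congr rfl fun a _ => ?_
    rw [Finset.mul_sum, Finset.mul_sum]
    refine Finset.sum_congr rfl fun b _ => ?_
    push_cast; ring
  rw [Finset.mul_sum, Finset.sum_congr rfl hL1]
  -- swap sums to put k innermost
  rw [Finset.sum_comm]
  have hcollapse : ∀ a ∈ Finset.range (n + 1),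
      (∑ k ∈ Finset.range (n + 1), ∑ b ∈ Finset.range (n + 1),
          ((n.choose k * (Nat.choose k a * Nat.descFactorial k (k - a))
              * (Nat.choose (n - k) b * Nat.descFactorial (n - k) (n - k - b)) : ℕ) : ℝ)
            * (x ^ (a + b + 1) * (iteratedDeriv a f x * iteratedDeriv b g x)))
        = ∑ b ∈ Finset.range (n + 1),
            ((Nat.choose n (a + b) * Nat.descFactorial (n + 1) (n - (a + b))
                * Nat.choose (a + b) a : ℕ) : ℝ)
              * (x ^ (a + b + 1) * (iteratedDeriv a f x * iteratedDeriv b g x)) := by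
    intro a _
    rw [Finset.sum_comm]
    refine Finset.sum_congr rfl fun b _ => ?_
    rw [← Finset.sum_mul, ← Nat.cast_sum, aux_coeff n a b]
  rw [Finset.sum_congr rfl hcollapse]
  refine (reindex_pairs n
    (fun j c => ((n.choose j * Nat.descFactorial (n + 1) (n - j) * Nat.choose j c : ℕ) : ℝ)
      * (x ^ (j + 1) * (iteratedDeriv c f x * iteratedDeriv (j - c) g x)))
    (fun a b => ((Nat.choose n (a + b) * Nat.descFactorial (n + 1) (n - (a + b))
        * Nat.choose (a + b) a : ℕ) : ℝ)
      * (x ^ (a + b + 1) * (iteratedDeriv a f x * iteratedDeriv b g x)))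
    ?_ ?_ ?_).symm
  · intro j c _ hjc
    rw [Nat.choose_eq_zero_of_lt hjc, Nat.mul_zero, Nat.cast_zero, zero_mul]
  · intro a b _ _ hn
    rw [Nat.choose_eq_zero_of_lt hn, Nat.zero_mul, Nat.zero_mul, Nat.cast_zero, zero_mul]
  · intro a b _
    rw [Nat.add_sub_cancel_left]
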